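/- For every n ≥ 5, the cycle graph C_n is prime: it is connected and admits no split. -/

import Mathlib

/-- The cycle graph `C_n` on vertices `ZMod n`, with `i` adjacent to `i + 1` and `i - 1`. -/
def cycleGraph (n : ℕ) : SimpleGraph (ZMod n) where
  Adj i j := i ≠ j ∧ (j = i + 1 ∨ j = i - 1)
  symm := ⟨by
    rintro i j ⟨h, h1 | h1⟩
    · exact ⟨h.symm, Or.inr (by rw [h1]; ring)⟩
    · exact ⟨h.symm, Or.inl (by rw [h1]; ring)⟩⟩
  loopless := ⟨fun i h => h.1 rfl⟩

/-- A split of a simple graph `G` on vertex set `V`: a partition `V = V0 ⊔ V1` with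
`|V0| ≥ 2` and `|V1| ≥ 2`, such that the edges between `V0` and `V1` are exactly
those of a complete bipartite graph `K(U0, U1)` with `U0 ⊆ V0`, `U1 ⊆ V1`. -/
def IsSplit {V : Type*} (G : SimpleGraph V) (V0 V1 : Set V) : Prop :=
  V0 ∪ V1 = Set.univ ∧ Disjoint V0 V1 ∧ 2 ≤ V0.ncard ∧ 2 ≤ V1.ncard ∧
    ∃ U0 ⊆ V0, ∃ U1 ⊆ V1, ∀ u ∈ V0, ∀ w ∈ V1, (G.Adj u w ↔ u ∈ U0 ∧ w ∈ U1)

private lemma stepAux (n : ℕ) [NeZero n] (S : Set (ZMod n)) (w x : ZMod n) (hx : x ∈ S)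
    (hxw : x ≠ w) (hcl : ∀ y ∈ S, y ≠ w → y + 1 ∈ S) : w - 1 ∈ S := by
  set k := (w - x).val with hk
  have hwx : ((k : ℕ) : ZMod n) = w - x := by
    rw [hk]; simp [ZMod.natCast_val, ZMod.cast_id]
  have hk1 : 1 ≤ k := by
    rcases Nat.eq_zero_or_pos k with h | h
    · rw [h] at hwx
      have h0 : (0 : ZMod n) = w - x := by exact_mod_cast hwx
      have : x = w := by linear_combination h0
      exact absurd this hxw
    · exact h
  have hkn : k < n := ZMod.val_lt _
  have claim : ∀ j, j < k → x + (j : ZMod n) ∈ S := by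
    intro j
    induction j with
    | zero => intro _; simpa using hx
    | succ j ih =>
      intro hj
      have hjk : j < k := Nat.lt_of_succ_lt hj
      have hjS : x + (j : ZMod n) ∈ S := ih hjk
      have hjne : x + (j : ZMod n) ≠ w := by
        intro h
        have : ((j : ℕ) : ZMod n) = ((k : ℕ) : ZMod n) := by rw [hwx]; linear_combination h
        have := (ZMod.natCast_eq_natCast_iff' j k n).mp this
        rw [Nat.mod_eq_of_lt (hjk.trans hkn), Nat.mod_eq_of_lt hkn] at this
        omega
      have := hcl _ hjS hjne
      push_cast
      convert this using 1; ring
  have hfin : x + ((k - 1 : ℕ) : ZMod n) ∈ S := claim _ (by omega)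
  have : x + ((k - 1 : ℕ) : ZMod n) = w - 1 := by
    rw [Nat.cast_sub hk1, hwx]; push_cast; ring
  rwa [this] at hfin

private lemma stepAux' (n : ℕ) [NeZero n] (S : Set (ZMod n)) (w x : ZMod n) (hx : x ∈ S)
    (hxw : x ≠ w) (hcl : ∀ y ∈ S, y ≠ w → y - 1 ∈ S) : w + 1 ∈ S := by
  have := stepAux n ((fun z => -z) ⁻¹' S) (-w) (-x)
    (by simpa using hx) (by simpa using hxw)
    (by
      intro y hy hyw
      simp only [Set.mem_preimage] at hy ⊢
      have h : -(y + 1) = -y - 1 := by ring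
      rw [h]
      exact hcl _ hy (fun h => hyw (by linear_combination -h)))
  simp only [Set.mem_preimage] at this
  have h : -(-w - 1) = w + 1 := by ring
  rwa [h] at this

/-- For every `n ≥ 5`, the cycle graph `C_n` is prime: it is connected and
admits no split. -/
theorem stmt6 (n : ℕ) (hn : 5 ≤ n) :
    (cycleGraph n).Connected ∧ ∀ V0 V1 : Set (ZMod n), ¬ IsSplit (cycleGraph n) V0 V1 := by
  haveI : NeZero n := ⟨by omega⟩
  have hdvd : ∀ m : ℕ, 0 < m → m < 5 → ((m : ZMod n) ≠ 0) := by
    intro m hm hm5 h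
    rw [ZMod.natCast_eq_zero_iff] at h
    have := Nat.le_of_dvd hm h
    omega
  have h1ne : (1 : ZMod n) ≠ 0 := by simpa using hdvd 1 (by omega) (by omega)
  have h2ne : (2 : ZMod n) ≠ 0 := by
    have := hdvd 2 (by omega) (by omega); simpa using this
  have h4ne : (4 : ZMod n) ≠ 0 := by
    have := hdvd 4 (by omega) (by omega); simpa using this
  have hadj1 : ∀ v : ZMod n, (cycleGraph n).Adj v (v + 1) := by
    intro v
    exact ⟨fun h => h1ne (by linear_combination -h), Or.inl rfl⟩
  have hadj1' : ∀ v : ZMod n, (cycleGraph n).Adj v (v - 1) := by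
    intro v
    exact ⟨fun h => h1ne (by linear_combination h), Or.inr rfl⟩
  constructor
  · -- connectedness
    have reach : ∀ k : ℕ, (cycleGraph n).Reachable 0 (k : ZMod n) := by
      intro k
      induction k with
      | zero => rw [Nat.cast_zero]
      | succ k ih =>
        have : ((k + 1 : ℕ) : ZMod n) = (k : ZMod n) + 1 := by push_cast; ring
        rw [this]
        exact ih.trans (hadj1 (k : ZMod n)).reachable
    rw [SimpleGraph.connected_iff]
    refine ⟨fun u v => ?_, ⟨0⟩⟩
    have hu : ((u.val : ℕ) : ZMod n) = u := by simp [ZMod.natCast_val, ZMod.cast_id]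
    have hv : ((v.val : ℕ) : ZMod n) = v := by simp [ZMod.natCast_val, ZMod.cast_id]
    rw [← hu, ← hv]
    exact (reach u.val).symm.trans (reach v.val)
  · rintro V0 V1 ⟨hcover, hdisj, hV0, hV1, U0, hU0, U1, hU1, hcross⟩
    have hmem : ∀ z : ZMod n, z ∈ V0 ∨ z ∈ V1 := by
      intro z
      have : z ∈ V0 ∪ V1 := by rw [hcover]; trivial
      exact this
    have hnotboth : ∀ z : ZMod n, z ∈ V0 → z ∈ V1 → False := fun z h0 h1 =>
      Set.disjoint_left.mp hdisj h0 h1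
    -- general closure property: a vertex of V0 not in U0 has its +1/-1 neighbors in V0
    have hclose0 : ∀ y ∈ V0, y ∉ U0 → y + 1 ∈ V0 := by
      intro y hy hyU
      rcases hmem (y + 1) with h | h
      · exact h
      · exact absurd ((hcross y hy (y + 1) h).mp (hadj1 y)).1 hyU
    have hclose0' : ∀ y ∈ V0, y ∉ U0 → y - 1 ∈ V0 := by
      intro y hy hyU
      rcases hmem (y - 1) with h | h
      · exact h
      · exact absurd ((hcross y hy (y - 1) h).mp (hadj1' y)).1 hyU
    have hclose1 : ∀ y ∈ V1, y ∉ U1 → y + 1 ∈ V1 := by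
      intro y hy hyU
      rcases hmem (y + 1) with h | h
      · exact absurd ((hcross (y + 1) h y hy).mp (hadj1 y).symm).2 hyU
      · exact h
    have hclose1' : ∀ y ∈ V1, y ∉ U1 → y - 1 ∈ V1 := by
      intro y hy hyU
      rcases hmem (y - 1) with h | h
      · exact absurd ((hcross (y - 1) h y hy).mp (hadj1' y).symm).2 hyU
      · exact h
    have hsub1 : ∀ z : ZMod n, z - 1 ≠ z := by
      intro z h
      exact h1ne (by linear_combination -h)
    have hadd1 : ∀ z : ZMod n, z + 1 ≠ z := by
      intro z h
      exact h1ne (by linear_combination h)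
    obtain ⟨a0, ha0, a0', ha0', hane⟩ : ∃ x ∈ V0, ∃ y ∈ V0, x ≠ y := by
      have h := hV0
      rw [show (2:ℕ) = 1 + 1 from rfl, Nat.add_one_le_iff,
        Set.one_lt_ncard_iff (Set.toFinite V0)] at h
      obtain ⟨x, y, hx, hy, hxy⟩ := h
      exact ⟨x, hx, y, hy, hxy⟩
    obtain ⟨b0, hb0, b0', hb0', hbne⟩ : ∃ x ∈ V1, ∃ y ∈ V1, x ≠ y := by
      have h := hV1
      rw [show (2:ℕ) = 1 + 1 from rfl, Nat.add_one_le_iff,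
        Set.one_lt_ncard_iff (Set.toFinite V1)] at h
      obtain ⟨x, y, hx, hy, hxy⟩ := h
      exact ⟨x, hx, y, hy, hxy⟩
    rcases Set.eq_empty_or_nonempty U0 with hU0e | ⟨a, haU0⟩
    · -- no cross edges at all
      have h1 : b0 - 1 ∈ V0 :=
        stepAux n V0 b0 a0 ha0 (fun h => hnotboth b0 (h ▸ ha0) hb0)
          (fun y hy _ => hclose0 y hy (by simp [hU0e]))
      have h2 : b0 - 1 + 1 ∈ V0 := hclose0 _ h1 (by simp [hU0e])
      rw [sub_add_cancel] at h2
      exact hnotboth b0 h2 hb0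
    rcases Set.eq_empty_or_nonempty U1 with hU1e | ⟨b, hbU1⟩
    · have h1 : a0 - 1 ∈ V1 :=
        stepAux n V1 a0 b0 hb0 (fun h => hnotboth a0 ha0 (h ▸ hb0))
          (fun y hy _ => hclose1 y hy (by simp [hU1e]))
      have h2 : a0 - 1 + 1 ∈ V1 := hclose1 _ h1 (by simp [hU1e])
      rw [sub_add_cancel] at h2
      exact hnotboth a0 ha0 h2
    have hab : (cycleGraph n).Adj a b := (hcross a (hU0 haU0) b (hU1 hbU1)).mpr ⟨haU0, hbU1⟩
    by_cases hU0s : ∀ u ∈ U0, u = a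
    · -- U0 = {a}
      obtain ⟨x, hx, hxa⟩ : ∃ x ∈ V0, x ≠ a := by
        rcases eq_or_ne a0 a with h | h
        · exact ⟨a0', ha0', fun h' => hane (h.trans h'.symm)⟩
        · exact ⟨a0, ha0, h⟩
      have hcl : ∀ y ∈ V0, y ≠ a → y + 1 ∈ V0 :=
        fun y hy hya => hclose0 y hy (fun hm => hya (hU0s y hm))
      have hcl' : ∀ y ∈ V0, y ≠ a → y - 1 ∈ V0 :=
        fun y hy hya => hclose0' y hy (fun hm => hya (hU0s y hm))
      have ham : a - 1 ∈ V0 := stepAux n V0 a x hx hxa hcl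
      have hap : a + 1 ∈ V0 := stepAux' n V0 a x hx hxa hcl'
      rcases hab.2 with h | h
      · exact hnotboth b (h ▸ hap) (hU1 hbU1)
      · exact hnotboth b (h ▸ ham) (hU1 hbU1)
    by_cases hU1s : ∀ w ∈ U1, w = b
    · -- U1 = {b}
      obtain ⟨x, hx, hxb⟩ : ∃ x ∈ V1, x ≠ b := by
        rcases eq_or_ne b0 b with h | h
        · exact ⟨b0', hb0', fun h' => hbne (h.trans h'.symm)⟩
        · exact ⟨b0, hb0, h⟩
      have hcl : ∀ y ∈ V1, y ≠ b → y + 1 ∈ V1 :=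
        fun y hy hyb => hclose1 y hy (fun hm => hyb (hU1s y hm))
      have hcl' : ∀ y ∈ V1, y ≠ b → y - 1 ∈ V1 :=
        fun y hy hyb => hclose1' y hy (fun hm => hyb (hU1s y hm))
      have hbm : b - 1 ∈ V1 := stepAux n V1 b x hx hxb hcl
      have hbp : b + 1 ∈ V1 := stepAux' n V1 b x hx hxb hcl'
      rcases hab.2 with h | h
      · -- b = a + 1, so a = b - 1 ∈ V1
        have : a = b - 1 := by linear_combination -h
        exact hnotboth a (hU0 haU0) (this ▸ hbm)
      · have : a = b + 1 := by linear_combination -h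
        exact hnotboth a (hU0 haU0) (this ▸ hbp)
    -- both U0 and U1 contain two distinct elements: 4-cycle contradiction
    push_neg at hU0s hU1s
    obtain ⟨u', hu'U0, hu'a⟩ := hU0s
    obtain ⟨w', hw'U1, hw'b⟩ := hU1s
    have e1 : b = a + 1 ∨ b = a - 1 := hab.2
    have e2 : w' = a + 1 ∨ w' = a - 1 :=
      ((hcross a (hU0 haU0) w' (hU1 hw'U1)).mpr ⟨haU0, hw'U1⟩).2
    have e3 : b = u' + 1 ∨ b = u' - 1 :=
      ((hcross u' (hU0 hu'U0) b (hU1 hbU1)).mpr ⟨hu'U0, hbU1⟩).2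
    have e4 : w' = u' + 1 ∨ w' = u' - 1 :=
      ((hcross u' (hU0 hu'U0) w' (hU1 hw'U1)).mpr ⟨hu'U0, hw'U1⟩).2
    rcases e1 with e1 | e1 <;> rcases e2 with e2 | e2 <;>
      rcases e3 with e3 | e3 <;> rcases e4 with e4 | e4 <;>
      first
      | exact hu'a (by linear_combination e3 - e1)
      | exact hu'a (by linear_combination e1 - e3)
      | exact hu'a (by linear_combination e4 - e2)
      | exact hu'a (by linear_combination e2 - e4)
      | exact hw'b (by linear_combination e2 - e1)
      | exact hw'b (by linear_combination e1 - e2)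
      | exact hw'b (by linear_combination e4 - e3)
      | exact hw'b (by linear_combination e3 - e4)
      | exact h4ne (by linear_combination e1 - e2 - e3 + e4)
      | exact h4ne (by linear_combination e2 + e3 - e1 - e4)
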